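/- Let x_L, x_R, ν_L, ν_R, T ∈ ℝ and define x̃_L(t) = x_L + (t - T)ν_L, x̃_R(t) = x_R + (t - T)ν_R, and α(x,t) = -ν_L·(x - x̃_R(t))/(x̃_R(t) - x̃_L(t)) + ν_R·(x - x̃_L(t))/(x̃_R(t) - x̃_L(t)). Assume x̃_R(t) ≠ x̃_L(t) for all t in an open interval J containing T, and let Ψ : ℝ → ℝ be differentiable. Define ξ(x,t) = x_L + (x_R - x_L)·(x - x̃_L(t))/(x̃_R(t) - x̃_L(t)) and ψ(x,t) = Ψ(ξ(x,t)). Then ψ satisfies the adjoint transport equation ∂_t ψ(x,t) + α(x,t)·∂_x ψ(x,t) = 0 for all x ∈ ℝ and t ∈ J, together with the terminal condition ψ(x, T) = Ψ(x) for all x ∈ ℝ. -/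

import Mathlib

theorem stmt_4 (xL xR νL νR T : ℝ)
    (J : Set ℝ) (hJopen : IsOpen J) (hTJ : T ∈ J) (hJconn : J.OrdConnected)
    (xtL xtR : ℝ → ℝ)
    (hxtL : ∀ t, xtL t = xL + (t - T) * νL)
    (hxtR : ∀ t, xtR t = xR + (t - T) * νR)
    (hne : ∀ t ∈ J, xtR t ≠ xtL t)
    (Ψ : ℝ → ℝ) (hΨ : Differentiable ℝ Ψ)
    (α ξ ψ : ℝ → ℝ → ℝ)
    (hα : ∀ x t, α x t =
      -νL * (x - xtR t) / (xtR t - xtL t) + νR * (x - xtL t) / (xtR t - xtL t))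
    (hξ : ∀ x t, ξ x t = xL + (xR - xL) * (x - xtL t) / (xtR t - xtL t))
    (hψ : ∀ x t, ψ x t = Ψ (ξ x t)) :
    (∀ x : ℝ, ∀ t ∈ J,
      deriv (fun s => ψ x s) t + α x t * deriv (fun y => ψ y t) x = 0) ∧
    (∀ x : ℝ, ψ x T = Ψ x) := by
  have hRL : xR - xL ≠ 0 := by
    have := hne T hTJ
    rw [hxtR, hxtL] at this
    simp at this
    intro h
    exact this (by linarith)
  constructor
  · intro x t htJ
    have hD : xtR t - xtL t ≠ 0 := sub_ne_zero.mpr (hne t htJ)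
    set D : ℝ := xtR t - xtL t with hDdef
    -- t-derivative
    have hnum : HasDerivAt (fun s : ℝ => x - xtL s) (-νL) t := by
      have h : HasDerivAt (fun s : ℝ => x - (xL + (s - T) * νL)) (-(1 * νL)) t :=
        ((((hasDerivAt_id t).sub_const T).mul_const νL).const_add xL).const_sub x
      simpa [hxtL] using h
    have hden : HasDerivAt (fun s : ℝ => xtR s - xtL s) (νR - νL) t := by
      have hr : HasDerivAt (fun s : ℝ => xR + (s - T) * νR) (1 * νR) t :=
        (((hasDerivAt_id t).sub_const T).mul_const νR).const_add xR
      have hl : HasDerivAt (fun s : ℝ => xL + (s - T) * νL) (1 * νL) t :=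
        (((hasDerivAt_id t).sub_const T).mul_const νL).const_add xL
      have := hr.sub hl
      simp only [one_mul] at this
      have heq : (fun s : ℝ => xtR s - xtL s)
          = fun s : ℝ => (xR + (s - T) * νR) - (xL + (s - T) * νL) := by
        funext s; rw [hxtR, hxtL]
      rw [heq]; exact this
    have hfrac : HasDerivAt (fun s : ℝ => (x - xtL s) / (xtR s - xtL s))
        (((-νL) * D - (x - xtL t) * (νR - νL)) / D ^ 2) t := hnum.div hden hD
    have hξt : HasDerivAt (fun s : ℝ => ξ x s)
        ((xR - xL) * (((-νL) * D - (x - xtL t) * (νR - νL)) / D ^ 2)) t := by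
      have := (hfrac.const_mul (xR - xL)).const_add xL
      have heq : (fun s : ℝ => ξ x s)
          = fun s : ℝ => xL + (xR - xL) * ((x - xtL s) / (xtR s - xtL s)) := by
        funext s; rw [hξ, mul_div_assoc]
      rw [heq]; exact this
    have hψt : HasDerivAt (fun s : ℝ => ψ x s)
        (deriv Ψ (ξ x t) * ((xR - xL) * (((-νL) * D - (x - xtL t) * (νR - νL)) / D ^ 2))) t := by
      have := ((hΨ (ξ x t)).hasDerivAt).comp t hξt
      have heq : (fun s : ℝ => ψ x s) = fun s : ℝ => Ψ (ξ x s) := by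
        funext s; rw [hψ]
      rw [heq]; exact this
    -- x-derivative
    have hξx : HasDerivAt (fun y : ℝ => ξ y t) ((xR - xL) * 1 / D) x := by
      have := ((((hasDerivAt_id x).sub_const (xtL t)).const_mul (xR - xL)).div_const D).const_add xL
      have heq : (fun y : ℝ => ξ y t)
          = fun y : ℝ => xL + (xR - xL) * (y - xtL t) / D := by
        funext y; rw [hξ]
      rw [heq]; exact this
    have hψx : HasDerivAt (fun y : ℝ => ψ y t)
        (deriv Ψ (ξ x t) * ((xR - xL) * 1 / D)) x := by
      have := ((hΨ (ξ x t)).hasDerivAt).comp x hξx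
      have heq : (fun y : ℝ => ψ y t) = fun y : ℝ => Ψ (ξ y t) := by
        funext y; rw [hψ]
      rw [heq]; exact this
    rw [hψt.deriv, hψx.deriv, hα]
    have hDsub : xtR t - xtL t = D := rfl
    rw [hDsub]
    field_simp
    ring
  · intro x
    have hTL : xtL T = xL := by rw [hxtL]; ring
    have hTR : xtR T = xR := by rw [hxtR]; ring
    rw [hψ, hξ, hTL, hTR]
    congr 1
    field_simp
    ring
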